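/- A nonzero element c ∈ Fin n → K is an idempotent of •_τ (equivalently, c(i+1)² = c(i) for all i ∈ Fin n, cyclically) if and only if c = c_k for some k ∈ ℤ/(2^n − 1)ℤ. Moreover the elements c_k, k ∈ ℤ/(2^n − 1)ℤ, are pairwise distinct, and they satisfy the multiplication rule c_i •_τ c_j = c_{2^(n−1)·(i+j)} for all i, j ∈ ℤ/(2^n − 1)ℤ. -/

import Mathlib

open Fin.NatCast in
/-- The nonzero idempotents of the cyclic-shift inner isotope `(Fin n → K, •_τ)` are exactly
the elements `c_k`, `k ∈ ℤ/(2^n − 1)ℤ`; these are pairwise distinct, and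
`c_i •_τ c_j = c_{2^(n−1)(i+j)}`. -/
theorem stmt_11 {K : Type*} [Field K] (n : ℕ) [NeZero n] (hn : 2 ≤ n)
    (ζ : K) (hζ : IsPrimitiveRoot ζ (2 ^ n - 1))
    (c : ZMod (2 ^ n - 1) → Fin n → K)
    (hc : ∀ k (i : Fin n), c k i = ζ ^ ((2 ^ (n - 1 - (i : ℕ)) * k : ZMod (2 ^ n - 1)).val)) :
    (∀ x : Fin n → K, x ≠ 0 →
      ((∀ i : Fin n, x (i + 1) * x (i + 1) = x i) ↔ ∃ k, x = c k)) ∧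
    Function.Injective c ∧
    (∀ i j : ZMod (2 ^ n - 1),
      (fun t : Fin n => c i (t + 1) * c j (t + 1)) = c (2 ^ (n - 1) * (i + j))) := by
  have h4 : 4 ≤ 2 ^ n := by
    calc (4:ℕ) = 2 ^ 2 := rfl
    _ ≤ 2 ^ n := Nat.pow_le_pow_right (by norm_num) hn
  haveI : NeZero (2 ^ n - 1) := ⟨by omega⟩
  have hNpos : 0 < 2 ^ n - 1 := by omega
  -- ζ^a only depends on a mod N
  have hpow : ∀ a : ℕ, ζ ^ (a % (2 ^ n - 1)) = ζ ^ a := by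
    intro a
    conv_rhs => rw [← Nat.div_add_mod a (2 ^ n - 1)]
    rw [pow_add, pow_mul, hζ.pow_eq_one, one_pow, one_mul]
  have hF : ∀ a b : ZMod (2 ^ n - 1), ζ ^ (a + b).val = ζ ^ a.val * ζ ^ b.val := by
    intro a b
    rw [ZMod.val_add, hpow, pow_add]
  have hFcast : ∀ a : ℕ, ζ ^ ((a : ZMod (2 ^ n - 1)).val) = ζ ^ a := by
    intro a; rw [ZMod.val_natCast, hpow]
  have htwo : ((2 : ZMod (2 ^ n - 1))) ^ n = 1 := by
    have h1 : ((2 ^ n : ℕ) : ZMod (2 ^ n - 1)) = ((2 ^ n - 1 : ℕ) : ZMod (2 ^ n - 1)) + 1 := by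
      have : (2 ^ n : ℕ) = (2 ^ n - 1) + 1 := by omega
      rw [this]; push_cast; ring
    rw [ZMod.natCast_self, zero_add] at h1
    rw [← h1]; push_cast; ring
  -- value of (i+1).val
  have hval : ∀ i : Fin n, ((i + 1 : Fin n) : ℕ) = (i : ℕ) + 1 ∨
      ((i : ℕ) = n - 1 ∧ ((i + 1 : Fin n) : ℕ) = 0) := by
    intro i
    have h1 : ((1 : Fin n) : ℕ) = 1 := by
      rw [Fin.val_one']; exact Nat.mod_eq_of_lt (by omega)
    have hadd : ((i + 1 : Fin n) : ℕ) = ((i : ℕ) + 1) % n := by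
      rw [Fin.add_def]; simp [h1]
    rcases lt_or_ge ((i : ℕ) + 1) n with h | h
    · left; rw [hadd, Nat.mod_eq_of_lt h]
    · right
      have hi := i.isLt
      have : (i : ℕ) = n - 1 := by omega
      constructor
      · exact this
      · rw [hadd, this]
        have : (n - 1 + 1) = n := by omega
        rw [this, Nat.mod_self]
  -- the c k are idempotents
  have hidem : ∀ k (i : Fin n), c k (i + 1) * c k (i + 1) = c k i := by
    intro k i
    have key : (2 : ZMod (2 ^ n - 1)) ^ (n - 1 - ((i + 1 : Fin n) : ℕ)) * k
        + 2 ^ (n - 1 - ((i + 1 : Fin n) : ℕ)) * k = 2 ^ (n - 1 - (i : ℕ)) * k := by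
      have hn1 : n - 1 + 1 = n := by omega
      have hp : (2 : ZMod (2 ^ n - 1)) ^ (n - 1 + 1) = 2 ^ n := by rw [hn1]
      rcases hval i with h | ⟨h1, h2⟩
      · have hlt : (i : ℕ) + 1 < n := h ▸ (i + 1 : Fin n).isLt
        have hexp : n - 1 - ((i : ℕ) + 1) + 1 = n - 1 - (i : ℕ) := by omega
        rw [h, ← hexp, pow_succ]
        ring
      · rw [h1, h2]
        have e1 : n - 1 - 0 = n - 1 := by omega
        have e2 : n - 1 - (n - 1) = 0 := by omega
        rw [e1, e2, pow_zero, one_mul]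
        have h3 : (2 : ZMod (2 ^ n - 1)) ^ (n - 1) * k + 2 ^ (n - 1) * k
            = (2 : ZMod (2 ^ n - 1)) ^ (n - 1 + 1) * k := by
          rw [pow_succ]; ring
        rw [h3, hp, htwo, one_mul]
    rw [hc, hc, ← hF, key]
  refine ⟨?_, ?_, ?_⟩
  · -- characterization of nonzero idempotents
    intro x hx
    constructor
    · intro h
      -- all coordinates nonzero
      have hnz : ∀ i, x i ≠ 0 := by
        intro i0 hi0
        apply hx
        have hall : ∀ m : ℕ, x (i0 + (m : Fin n)) = 0 := by
          intro m
          induction m with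
          | zero => simpa using hi0
          | succ m ih =>
            have h2 := h (i0 + (m : Fin n))
            rw [ih] at h2
            have h3 : x (i0 + (m : Fin n) + 1) = 0 := by
              by_contra hne
              exact hne (by
                have := mul_self_eq_zero.mp h2
                exact this)
            have : ((m + 1 : ℕ) : Fin n) = (m : Fin n) + 1 := by push_cast; ring
            rw [this, ← add_assoc]
            exact h3
        funext j
        have := hall ((j - i0).val)
        rwa [Fin.cast_val_eq_self, add_sub_cancel] at this
      set L : Fin n := ((n - 1 : ℕ) : Fin n) with hL
      set a : K := x L with ha
      have hstep : ∀ m : ℕ, x (L - (m : Fin n)) = a ^ (2 ^ m) := by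
        intro m
        induction m with
        | zero => simp [ha]
        | succ m ih =>
          have hfin : (L - ((m + 1 : ℕ) : Fin n)) + 1 = L - (m : Fin n) := by
            push_cast
            abel
          have h2 := h (L - ((m + 1 : ℕ) : Fin n))
          rw [hfin, ih] at h2
          rw [← h2, ← pow_add, pow_succ]
          ring_nf
      have hNeq : a ^ (2 ^ n) = a := by
        have := hstep n
        rw [Fin.natCast_self, sub_zero, ← ha] at this
        exact this.symm
      have haN : a ^ (2 ^ n - 1) = 1 := by
        have hane : a ≠ 0 := hnz L
        have : a * a ^ (2 ^ n - 1) = a * 1 := by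
          rw [mul_one, ← pow_succ']
          have : 2 ^ n - 1 + 1 = 2 ^ n := by omega
          rw [this]
          exact hNeq
        exact mul_left_cancel₀ hane this
      obtain ⟨k, hk_lt, hk⟩ := hζ.eq_pow_of_pow_eq_one haN
      refine ⟨(k : ZMod (2 ^ n - 1)), ?_⟩
      funext i
      have hxi : x i = a ^ (2 ^ (n - 1 - (i : ℕ))) := by
        obtain ⟨m, hm⟩ : ∃ m : ℕ, n - 1 - (i : ℕ) = m := ⟨_, rfl⟩
        have hfin : L - ((n - 1 - (i : ℕ) : ℕ) : Fin n) = i := by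
          have hsum : (n - 1 : ℕ) = m + (i : ℕ) := by
            have := i.isLt; omega
          rw [hL, hm, hsum]
          push_cast
          rw [add_sub_cancel_left]
        have := hstep (n - 1 - (i : ℕ))
        rwa [hfin] at this
      rw [hxi, hc, ← hk, ← pow_mul]
      have : (2 : ZMod (2 ^ n - 1)) ^ (n - 1 - (i : ℕ)) * (k : ZMod (2 ^ n - 1))
          = ((2 ^ (n - 1 - (i : ℕ)) * k : ℕ) : ZMod (2 ^ n - 1)) := by push_cast; ring
      rw [this, hFcast, mul_comm]
    · rintro ⟨k, rfl⟩
      exact hidem k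
  · -- injectivity
    intro k l hkl
    have hL : (((n - 1 : ℕ) : Fin n) : ℕ) = n - 1 := by
      rw [Fin.val_natCast]; exact Nat.mod_eq_of_lt (by omega)
    have h1 := congrFun hkl ((n - 1 : ℕ) : Fin n)
    rw [hc, hc, hL] at h1
    have he : n - 1 - (n - 1) = 0 := by omega
    rw [he, pow_zero, one_mul, one_mul] at h1
    have := hζ.pow_inj (ZMod.val_lt k) (ZMod.val_lt l) h1
    exact ZMod.val_injective _ this
  · -- multiplication rule
    intro i j
    funext t
    show c i (t + 1) * c j (t + 1) = _
    have key : (2 : ZMod (2 ^ n - 1)) ^ (n - 1 - ((t + 1 : Fin n) : ℕ)) * i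
        + 2 ^ (n - 1 - ((t + 1 : Fin n) : ℕ)) * j
        = 2 ^ (n - 1 - (t : ℕ)) * (2 ^ (n - 1) * (i + j)) := by
      rcases hval t with h | ⟨h1, h2⟩
      · have hlt : (t : ℕ) + 1 < n := h ▸ (t + 1 : Fin n).isLt
        have hexp : (n - 1 - (t : ℕ)) + (n - 1) = (n - 1 - ((t : ℕ) + 1)) + n := by omega
        have h2 : (2 : ZMod (2 ^ n - 1)) ^ (n - 1 - (t : ℕ)) * 2 ^ (n - 1)
            = (2 : ZMod (2 ^ n - 1)) ^ (n - 1 - ((t : ℕ) + 1)) := by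
          rw [← pow_add, hexp, pow_add, htwo, mul_one]
        rw [h, ← mul_assoc, h2]
        ring
      · rw [h1, h2]
        have e1 : n - 1 - 0 = n - 1 := by omega
        have e2 : n - 1 - (n - 1) = 0 := by omega
        rw [e1, e2, pow_zero, one_mul]
        ring
    rw [hc, hc, hc, ← hF, key]
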